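/- Let σ₁ = (n_i) and σ₂ = (p_i) be infinite sequences of integers with n_i ≥ 2 and p_i ≥ 2 for all i. If σ₁ ≺ σ₂ in lexicographic order (at the first index k where they differ, n_k < p_k), then the minus continued fraction values satisfy (0, n₁, n₂, …) < (0, p₁, p₂, …). -/

import Mathlib

open Filter Topology

/-- Numerators: `pfun n (k+2) = p_k`, `p_{-2}=0`, `p_{-1}=1`, `p_k = n_k p_{k-1} - p_{k-2}`. -/
def pnum (n : ℕ → ℤ) : ℕ → ℤ
  | 0 => 0
  | 1 => 1
  | k + 2 => n k * pnum n (k + 1) - pnum n k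

/-- Denominators: `qden n (k+2) = q_k`, `q_{-2}=-1`, `q_{-1}=0`, `q_k = n_k q_{k-1} - q_{k-2}`. -/
def qden (n : ℕ → ℤ) : ℕ → ℤ
  | 0 => -1
  | 1 => 0
  | k + 2 => n k * qden n (k + 1) - qden n k

/-- Prepend the digit `0`, giving the digit sequence of `(0, n₁, n₂, …)`. -/
def prep (n : ℕ → ℤ) : ℕ → ℤ
  | 0 => 0
  | i + 1 => n i

/-- `x` is the value of the minus continued fraction `(0, n₁, n₂, …)`. -/
def IsMinusCF (x : ℝ) (n : ℕ → ℤ) : Prop :=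
  Tendsto (fun k : ℕ =>
      (pnum (prep n) (k + 2) : ℝ) / (qden (prep n) (k + 2) : ℝ)) atTop (𝓝 x)

lemma pnum_succ (m : ℕ → ℤ) (k : ℕ) : pnum m (k+2) = m k * pnum m (k+1) - pnum m k := rfl
lemma qden_succ (m : ℕ → ℤ) (k : ℕ) : qden m (k+2) = m k * qden m (k+1) - qden m k := rfl

lemma det_eq (m : ℕ → ℤ) : ∀ j, pnum m (j+1) * qden m j - pnum m j * qden m (j+1) = -1 := by
  intro j
  induction j with
  | zero => simp [pnum, qden]
  | succ j ih =>
    rw [pnum_succ, qden_succ]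
    linear_combination ih

lemma qden_pos (m : ℕ → ℤ) (hm : ∀ j, 2 ≤ m (j+1)) :
    ∀ j, 0 ≤ qden m (j+1) ∧ qden m (j+1) < qden m (j+2) := by
  intro j
  induction j with
  | zero => simp [qden]
  | succ j ih =>
    obtain ⟨h0, h1⟩ := ih
    refine ⟨by linarith, ?_⟩
    have h2 := hm j
    have key : qden m (j+3) = m (j+1) * qden m (j+2) - qden m (j+1) := rfl
    show qden m (j+2) < qden m (j+3)
    nlinarith

lemma pq_agree (m1 m2 : ℕ → ℤ) (k : ℕ) (h : ∀ j, j < k → m1 j = m2 j) :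
    ∀ j, j ≤ k + 1 → pnum m1 j = pnum m2 j ∧ qden m1 j = qden m2 j := by
  intro j
  induction j using Nat.strong_induction_on with
  | _ j ih =>
    intro hj
    match j with
    | 0 => simp [pnum, qden]
    | 1 => simp [pnum, qden]
    | (j : ℕ) + 2 =>
      have h1 := ih (j+1) (by omega) (by omega)
      have h0 := ih j (by omega) (by omega)
      have hd : m1 j = m2 j := h j (by omega)
      rw [pnum_succ, pnum_succ, qden_succ, qden_succ, h1.1, h1.2, h0.1, h0.2, hd]
      exact ⟨rfl, rfl⟩

lemma conv_strict_anti (m : ℕ → ℤ) (hm : ∀ j, 2 ≤ m (j+1)) (j : ℕ) :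
    (pnum m (j+3) : ℝ) / (qden m (j+3)) < (pnum m (j+2) : ℝ) / (qden m (j+2)) := by
  have h1 : 0 ≤ qden m (j+1) ∧ qden m (j+1) < qden m (j+2) := qden_pos m hm j
  have h2 : 0 ≤ qden m (j+2) ∧ qden m (j+2) < qden m (j+3) := qden_pos m hm (j+1)
  have hq2 : (0:ℤ) < qden m (j+2) := lt_of_le_of_lt h1.1 h1.2
  have hq3 : (0:ℤ) < qden m (j+3) := lt_of_le_of_lt h2.1 h2.2
  rw [div_lt_div_iff₀ (by exact_mod_cast hq3) (by exact_mod_cast hq2)]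
  have hdet : pnum m (j+3) * qden m (j+2) - pnum m (j+2) * qden m (j+3) = -1 := det_eq m (j+2)
  have key : (pnum m (j+3) * qden m (j+2) : ℤ) < pnum m (j+2) * qden m (j+3) := by linarith
  exact_mod_cast key

lemma d_lt_c (m : ℕ → ℤ) (hm : ∀ j, 2 ≤ m (j+1)) (j : ℕ) :
    ((pnum m (j+2) - pnum m (j+1) : ℤ) : ℝ) / ((qden m (j+2) - qden m (j+1) : ℤ) : ℝ)
      < (pnum m (j+2) : ℝ) / (qden m (j+2)) := by
  have h1 : 0 ≤ qden m (j+1) ∧ qden m (j+1) < qden m (j+2) := qden_pos m hm j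
  have hq2 : (0:ℤ) < qden m (j+2) := lt_of_le_of_lt h1.1 h1.2
  have hqd : (0:ℤ) < qden m (j+2) - qden m (j+1) := by linarith [h1.2]
  rw [div_lt_div_iff₀ (by exact_mod_cast hqd) (by exact_mod_cast hq2)]
  have hdet : pnum m (j+2) * qden m (j+1) - pnum m (j+1) * qden m (j+2) = -1 := det_eq m (j+1)
  have key : ((pnum m (j+2) - pnum m (j+1)) * qden m (j+2) : ℤ)
      < pnum m (j+2) * (qden m (j+2) - qden m (j+1)) := by nlinarith
  exact_mod_cast key

lemma d_mono (m : ℕ → ℤ) (hm : ∀ j, 2 ≤ m (j+1)) (j : ℕ) :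
    ((pnum m (j+2) - pnum m (j+1) : ℤ) : ℝ) / ((qden m (j+2) - qden m (j+1) : ℤ) : ℝ)
      ≤ ((pnum m (j+3) - pnum m (j+2) : ℤ) : ℝ) / ((qden m (j+3) - qden m (j+2) : ℤ) : ℝ) := by
  have h1 : 0 ≤ qden m (j+1) ∧ qden m (j+1) < qden m (j+2) := qden_pos m hm j
  have h2 : 0 ≤ qden m (j+2) ∧ qden m (j+2) < qden m (j+3) := qden_pos m hm (j+1)
  have hd1 : (0:ℤ) < qden m (j+2) - qden m (j+1) := by linarith [h1.2]
  have hd2 : (0:ℤ) < qden m (j+3) - qden m (j+2) := by linarith [h2.2]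
  rw [div_le_div_iff₀ (by exact_mod_cast hd1) (by exact_mod_cast hd2)]
  have hdet : pnum m (j+2) * qden m (j+1) - pnum m (j+1) * qden m (j+2) = -1 := det_eq m (j+1)
  have hp3 : pnum m (j+3) = m (j+1) * pnum m (j+2) - pnum m (j+1) := rfl
  have hq3 : qden m (j+3) = m (j+1) * qden m (j+2) - qden m (j+1) := rfl
  have hmj : 2 ≤ m (j+1) := hm j
  have keyeq : (pnum m (j+3) - pnum m (j+2)) * (qden m (j+2) - qden m (j+1))
      - (pnum m (j+2) - pnum m (j+1)) * (qden m (j+3) - qden m (j+2)) = m (j+1) - 2 := by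
    rw [hp3, hq3]
    linear_combination (2 - m (j+1)) * hdet
  have key : ((pnum m (j+2) - pnum m (j+1)) * (qden m (j+3) - qden m (j+2)) : ℤ)
      ≤ (pnum m (j+3) - pnum m (j+2)) * (qden m (j+2) - qden m (j+1)) := by linarith
  exact_mod_cast key

theorem lex_lt_of_minus_cf (n p : ℕ → ℤ) (hn : ∀ i, 2 ≤ n i) (hp : ∀ i, 2 ≤ p i)
    (x y : ℝ) (hx : IsMinusCF x n) (hy : IsMinusCF y p)
    (hlex : ∃ k : ℕ, (∀ j, j < k → n j = p j) ∧ n k < p k) :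
    x < y := by
  obtain ⟨k, hagree, hlt⟩ := hlex
  have hNd : ∀ j, 2 ≤ prep n (j+1) := fun j => hn j
  have hPd : ∀ j, 2 ≤ prep p (j+1) := fun j => hp j
  set N := prep n with hNdef
  set P := prep p with hPdef
  -- x ≤ c_N (k+2)
  have hanti : Antitone (fun j : ℕ => (pnum N (j+2) : ℝ) / (qden N (j+2))) :=
    antitone_nat_of_succ_le fun j =>
      (le_of_lt (conv_strict_anti N hNd j) :
        (pnum N (j+1+2) : ℝ) / (qden N (j+1+2)) ≤ (pnum N (j+2) : ℝ) / (qden N (j+2)))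
  have hxle : x ≤ (pnum N (k+4) : ℝ) / (qden N (k+4)) := by
    refine le_of_tendsto hx (eventually_atTop.2 ⟨k+2, fun j hj => ?_⟩)
    exact (hanti hj : (pnum N (j+2) : ℝ) / (qden N (j+2)) ≤ (pnum N (k+2+2) : ℝ) / (qden N (k+2+2)))
  have hstep : (pnum N (k+4) : ℝ) / (qden N (k+4)) < (pnum N (k+3) : ℝ) / (qden N (k+3)) :=
    conv_strict_anti N hNd (k+1)
  -- y ≥ d_P (k+1)
  have hmono : Monotone (fun j : ℕ =>
      ((pnum P (j+2) - pnum P (j+1) : ℤ) : ℝ) / ((qden P (j+2) - qden P (j+1) : ℤ) : ℝ)) :=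
    monotone_nat_of_le_succ fun j => d_mono P hPd j
  have hyge : ((pnum P (k+3) - pnum P (k+2) : ℤ) : ℝ) / ((qden P (k+3) - qden P (k+2) : ℤ) : ℝ) ≤ y := by
    refine ge_of_tendsto hy (eventually_atTop.2 ⟨k+1, fun j hj => ?_⟩)
    have step1 : ((pnum P (k+3) - pnum P (k+2) : ℤ) : ℝ) / ((qden P (k+3) - qden P (k+2) : ℤ) : ℝ)
        ≤ ((pnum P (j+2) - pnum P (j+1) : ℤ) : ℝ) / ((qden P (j+2) - qden P (j+1) : ℤ) : ℝ) :=
      (hmono hj : ((pnum P (k+1+2) - pnum P (k+1+1) : ℤ) : ℝ) / _ ≤ _)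
    exact le_trans step1 (d_lt_c P hPd j).le
  -- middle inequality
  have hag : ∀ j, j ≤ k + 2 → pnum N j = pnum P j ∧ qden N j = qden P j := by
    have h : ∀ j, j < k + 1 → N j = P j := by
      intro j hj
      match j with
      | 0 => rfl
      | (i : ℕ) + 1 => exact hagree i (by omega)
    exact pq_agree N P (k+1) h
  have hmid : (pnum N (k+3) : ℝ) / (qden N (k+3))
      ≤ ((pnum P (k+3) - pnum P (k+2) : ℤ) : ℝ) / ((qden P (k+3) - qden P (k+2) : ℤ) : ℝ) := by
    have hA1 := hag (k+1) (by omega)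
    have hA2 := hag (k+2) (by omega)
    have h1N : 0 ≤ qden N (k+2) ∧ qden N (k+2) < qden N (k+3) := qden_pos N hNd (k+1)
    have h1P : 0 ≤ qden P (k+2) ∧ qden P (k+2) < qden P (k+3) := qden_pos P hPd (k+1)
    have hq3N : (0:ℤ) < qden N (k+3) := lt_of_le_of_lt h1N.1 h1N.2
    have hdP : (0:ℤ) < qden P (k+3) - qden P (k+2) := by linarith [h1P.2]
    rw [div_le_div_iff₀ (by exact_mod_cast hq3N) (by exact_mod_cast hdP)]
    have e1 : pnum N (k+3) = n k * pnum N (k+2) - pnum N (k+1) := rfl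
    have e2 : qden N (k+3) = n k * qden N (k+2) - qden N (k+1) := rfl
    have e3 : pnum P (k+3) = p k * pnum P (k+2) - pnum P (k+1) := rfl
    have e4 : qden P (k+3) = p k * qden P (k+2) - qden P (k+1) := rfl
    have hdet : pnum N (k+2) * qden N (k+1) - pnum N (k+1) * qden N (k+2) = -1 := det_eq N (k+1)
    have key : (pnum N (k+3) * (qden P (k+3) - qden P (k+2)) : ℤ)
        ≤ (pnum P (k+3) - pnum P (k+2)) * qden N (k+3) := by
      have keyeq : ((pnum P (k+3) - pnum P (k+2)) * qden N (k+3)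
          - pnum N (k+3) * (qden P (k+3) - qden P (k+2)) : ℤ) = p k - 1 - n k := by
        rw [e1, e2, e3, e4, ← hA1.1, ← hA1.2, ← hA2.1, ← hA2.2]
        linear_combination (n k + 1 - p k) * hdet
      linarith
    exact_mod_cast key
  linarith
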